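/- Let f : ℝ → ℝ be a monotone continuous function and E ⊆ ℝ a bounded Lebesgue null set such that f is Lipschitz at every point of E except countably many. Then the image f(E) is Lebesgue null. -/

import Mathlib

open Metric Set Function MeasureTheory
open scoped ENNReal NNReal

lemma aux_image_null (f : ℝ → ℝ) (hmono : Monotone f) (n : ℕ) (A : Set ℝ)
    (hA : volume A = 0)
    (hL : ∀ s ∈ A, ∀ ε : ℝ, |ε| ≤ 1 / (n + 1) → |f (s + ε) - f s| ≤ (n + 1) * |ε|) :
    volume (f '' A) = 0 := by
  set C : ℝ≥0∞ := ENNReal.ofReal (5 * (n + 1)) with hC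
  have hCpos : 0 < C := by
    rw [hC]; apply ENNReal.ofReal_pos.2; positivity
  have hCne : C ≠ ∞ := ENNReal.ofReal_ne_top
  have key : ∀ η : ℝ≥0∞, 0 < η → volume (f '' A) ≤ C * η := by
    intro η hη
    obtain ⟨U, hAU, hUopen, hUlt⟩ := Set.exists_isOpen_lt_of_lt A η (hA ▸ hη)
    -- choose radii
    have hrex : ∀ s ∈ A, ∃ ρ : ℝ, 0 < ρ ∧ ρ ≤ 1 / (5 * (n + 1)) ∧ closedBall s ρ ⊆ U := by
      intro s hs
      obtain ⟨ε, hε, hb⟩ := Metric.isOpen_iff.1 hUopen s (hAU hs)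
      refine ⟨min (ε / 2) (1 / (5 * (n + 1))), ?_, min_le_right _ _, ?_⟩
      · apply lt_min (by linarith) (by positivity)
      · refine subset_trans ?_ hb
        intro y hy
        have : dist y s ≤ min (ε / 2) (1 / (5 * (n + 1))) := hy
        have := this.trans (min_le_left _ _)
        exact lt_of_le_of_lt this (by linarith) 
    choose! r hr0 hr1 hrU using hrex
    obtain ⟨u, huA, hdisj, hcov⟩ :=
      Vitali.exists_disjoint_subfamily_covering_enlargement_closedBall A id r
        (1 / (5 * (n + 1))) (fun a ha => hr1 a ha) 5 (by norm_num)
    simp only [id] at hdisj hcov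
    have hucnt : u.Countable := by
      apply hdisj.countable_of_nonempty_interior
      intro b hb
      have : (0:ℝ) < r b := hr0 b (huA hb)
      exact ⟨b, by simp [Real.ball_eq_Ioo, interior_closedBall b this.ne', this]⟩
    have himg : f '' A ⊆ ⋃ b ∈ u, Icc (f (b - 5 * r b)) (f (b + 5 * r b)) := by
      rintro _ ⟨s, hs, rfl⟩
      obtain ⟨b, hb, hsub⟩ := hcov s hs
      have hmem : s ∈ closedBall (id b) (5 * r b) := hsub (mem_closedBall_self (hr0 s hs).le)
      simp only [id, Real.closedBall_eq_Icc] at hmem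
      exact mem_biUnion hb ⟨hmono hmem.1, hmono hmem.2⟩
    have hlen : ∀ b ∈ u, volume (Icc (f (b - 5 * r b)) (f (b + 5 * r b)))
        ≤ C * volume (closedBall b (r b)) := by
      intro b hb
      have hbA := huA hb
      have h5r : |(5 * r b)| ≤ 1 / (n + 1) := by
        rw [abs_of_nonneg (mul_nonneg (by norm_num) (hr0 b hbA).le)]
        have h := hr1 b hbA
        have he : 5 * (1 / (5 * ((n:ℝ) + 1))) = 1 / ((n:ℝ) + 1) := by
          field_simp
        linarith
      have h1 := hL b hbA (5 * r b) h5r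
      have h2 := hL b hbA (-(5 * r b)) (by rwa [abs_neg])
      rw [abs_neg] at h2
      have hd : f (b + 5 * r b) - f (b - 5 * r b) ≤ 5 * (n + 1) * (2 * r b) := by
        have e1 : f (b + 5 * r b) - f b ≤ (n + 1) * |5 * r b| := (abs_le.1 h1).2
        have e2 : -((n + 1) * |5 * r b|) ≤ f (b + -(5 * r b)) - f b := (abs_le.1 h2).1
        have e3 : b + -(5 * r b) = b - 5 * r b := by ring
        rw [e3] at e2
        have habs : |5 * r b| = 5 * r b := abs_of_nonneg (mul_nonneg (by norm_num) (hr0 b hbA).le)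
        rw [habs] at e1 e2
        linarith
      rw [Real.volume_Icc, Real.volume_closedBall, hC, ← ENNReal.ofReal_mul (by positivity)]
      exact ENNReal.ofReal_le_ofReal (by linarith)
    calc volume (f '' A) ≤ volume (⋃ b ∈ u, Icc (f (b - 5 * r b)) (f (b + 5 * r b))) :=
          measure_mono himg
      _ ≤ ∑' b : u, volume (Icc (f (b - 5 * r b)) (f (b + 5 * r b))) :=
          measure_biUnion_le volume hucnt _
      _ ≤ ∑' b : u, C * volume (closedBall (b : ℝ) (r b)) :=
          ENNReal.tsum_le_tsum fun b => hlen b b.2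
      _ = C * ∑' b : u, volume (closedBall (b : ℝ) (r b)) := ENNReal.tsum_mul_left
      _ = C * volume (⋃ b ∈ u, closedBall b (r b)) := by
          rw [measure_biUnion hucnt hdisj (fun b _ => measurableSet_closedBall)]
      _ ≤ C * volume U :=
          mul_le_mul_of_nonneg_left (measure_mono (iUnion₂_subset fun b hb => hrU b (huA hb))) zero_le
      _ ≤ C * η := mul_le_mul_of_nonneg_left hUlt.le zero_le
  refine le_antisymm ?_ zero_le
  refine ENNReal.le_of_forall_pos_le_add fun δ hδ _ => ?_
  rw [zero_add]
  have h1 := key ((δ : ℝ≥0∞) / C) (ENNReal.div_pos (by exact_mod_cast hδ.ne') hCne)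
  rwa [ENNReal.mul_div_cancel hCpos.ne' hCne] at h1

/-- `f` is Lipschitz at the point `s`: there is a constant `C` with
`|f(s+ε)-f(s)| ≤ C|ε| + o(ε)` for small `ε`. -/
def LipschitzPtAt (f : ℝ → ℝ) (s : ℝ) : Prop :=
  ∃ C : ℝ, ∀ η : ℝ, 0 < η → ∃ δ : ℝ, 0 < δ ∧ ∀ ε : ℝ, |ε| < δ →
    |f (s + ε) - f s| ≤ C * |ε| + η * |ε|

theorem image_null_of_monotone_lipschitzPtAt
    (f : ℝ → ℝ) (hmono : Monotone f) (hcont : Continuous f)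
    (E : Set ℝ) (hbdd : Bornology.IsBounded E) (hnull : volume E = 0)
    (hcnt : {s ∈ E | ¬ LipschitzPtAt f s}.Countable) :
    volume (f '' E) = 0 := by
  simp only [LipschitzPtAt] at hcnt
  set A : ℕ → Set ℝ := fun n =>
    {s ∈ E | ∀ ε : ℝ, |ε| ≤ 1 / (n + 1) → |f (s + ε) - f s| ≤ (n + 1) * |ε|} with hA
  set bad := {s ∈ E | ¬ (∃ C : ℝ, ∀ η : ℝ, 0 < η → ∃ δ : ℝ, 0 < δ ∧ ∀ ε : ℝ, |ε| < δ →
      |f (s + ε) - f s| ≤ C * |ε| + η * |ε|)} with hbad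
  have hsub : f '' E ⊆ (f '' bad) ∪ ⋃ n, f '' A n := by
    rintro _ ⟨s, hs, rfl⟩
    by_cases h : ∃ C : ℝ, ∀ η : ℝ, 0 < η → ∃ δ : ℝ, 0 < δ ∧ ∀ ε : ℝ, |ε| < δ →
        |f (s + ε) - f s| ≤ C * |ε| + η * |ε|
    · obtain ⟨C, hC⟩ := h
      obtain ⟨δ, hδ, hδ'⟩ := hC 1 one_pos
      obtain ⟨n, hn⟩ := exists_nat_gt (max (C + 1) (1 / δ))
      refine Or.inr (mem_iUnion.2 ⟨n, mem_image_of_mem f ?_⟩)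
      refine ⟨hs, fun ε hε => ?_⟩
      have hC1 : C + 1 ≤ (n : ℝ) + 1 := by
        have := (le_max_left (C + 1) (1 / δ)).trans hn.le; linarith
      have hδn : 1 / ((n : ℝ) + 1) < δ := by
        have h2 : 1 / δ < (n : ℝ) + 1 := by
          have := (le_max_right (C + 1) (1 / δ)).trans hn.le; linarith
        rw [div_lt_iff₀ (by positivity)]
        rw [div_lt_iff₀ hδ] at h2
        linarith
      have := hδ' ε (lt_of_le_of_lt hε hδn)
      calc |f (s + ε) - f s| ≤ C * |ε| + 1 * |ε| := this
        _ = (C + 1) * |ε| := by ring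
        _ ≤ ((n : ℝ) + 1) * |ε| := by
            exact mul_le_mul_of_nonneg_right hC1 (abs_nonneg ε)
    · exact Or.inl (mem_image_of_mem f ⟨hs, h⟩)
  refine le_antisymm ?_ zero_le
  calc volume (f '' E) ≤ volume ((f '' bad) ∪ ⋃ n, f '' A n) := measure_mono hsub
    _ ≤ volume (f '' bad) + volume (⋃ n, f '' A n) := measure_union_le _ _
    _ ≤ 0 + 0 := by
        refine add_le_add ?_ ?_
        · exact le_of_eq ((hcnt.image f).measure_zero _)
        · refine le_of_eq (measure_iUnion_null fun n => ?_)
          refine aux_image_null f hmono n (A n)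
            (le_antisymm (hnull ▸ measure_mono fun s hs => hs.1) zero_le)
            (fun s hs => hs.2)
    _ = 0 := by simp
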